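/- Every bi-continuous function f : C → [0,1], where C is a maximal chain of [0,1]^d, is surjective. -/
import Mathlib


open unitInterval

instance : Fact ((0:ℝ) ≤ 1) := ⟨zero_le_one⟩

/-- Every bi-continuous function from a maximal chain of `[0,1]^d` to `[0,1]`
is surjective. Bi-continuity is expressed by preservation of all least upper
bounds and all greatest lower bounds. -/
theorem stmt_11 (d : ℕ) (C : Set (Fin d → unitInterval))
    (hC : IsMaxChain (· ≤ ·) C) (f : C → unitInterval)
    (hjoin : ∀ (X : Set C) (s : C), IsLUB X s → IsLUB (f '' X) (f s))
    (hmeet : ∀ (X : Set C) (s : C), IsGLB X s → IsGLB (f '' X) (f s)) :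
    Function.Surjective f := by
  obtain ⟨hchain, hmax⟩ := hC
  -- any element comparable with all elements of C lies in C
  have mem_of_comp : ∀ a : Fin d → unitInterval,
      (∀ c ∈ C, a ≤ c ∨ c ≤ a) → a ∈ C := by
    intro a ha
    have hch : IsChain (· ≤ ·) (insert a C) := by
      apply hchain.insert
      intro c hc _
      exact ha c hc
    have := hmax hch (Set.subset_insert _ _)
    rw [this]
    exact Set.mem_insert _ _
  -- C is closed under suprema
  have hsup : ∀ X : Set C, ∃ s : C, IsLUB X s := by
    intro X
    set S : Set (Fin d → unitInterval) := Subtype.val '' X with hS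
    set a := sSup S with haa
    have haC : a ∈ C := by
      apply mem_of_comp
      intro c hc
      by_cases h : ∀ x ∈ S, x ≤ c
      · exact Or.inl (sSup_le h)
      · push_neg at h
        obtain ⟨x, hxS, hxc⟩ := h
        obtain ⟨u, huX, rfl⟩ := hxS
        rcases hchain.total u.2 hc with h1 | h1
        · exact absurd h1 hxc
        · exact Or.inr (le_trans h1 (le_sSup ⟨u, huX, rfl⟩))
    refine ⟨⟨a, haC⟩, ?_⟩
    constructor
    · intro x hx
      show x.val ≤ a
      exact le_sSup ⟨x, hx, rfl⟩
    · intro b hb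
      show a ≤ b.val
      apply sSup_le
      rintro x ⟨u, hu, rfl⟩
      exact hb hu
  -- C is closed under infima
  have hinf : ∀ X : Set C, ∃ s : C, IsGLB X s := by
    intro X
    set S : Set (Fin d → unitInterval) := Subtype.val '' X with hS
    set a := sInf S with haa
    have haC : a ∈ C := by
      apply mem_of_comp
      intro c hc
      by_cases h : ∀ x ∈ S, c ≤ x
      · exact Or.inr (le_sInf h)
      · push_neg at h
        obtain ⟨x, hxS, hxc⟩ := h
        obtain ⟨u, huX, rfl⟩ := hxS
        rcases hchain.total u.2 hc with h1 | h1
        · exact Or.inl (le_trans (sInf_le ⟨u, huX, rfl⟩) h1)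
        · exact absurd h1 hxc
    refine ⟨⟨a, haC⟩, ?_⟩
    constructor
    · intro x hx
      show a ≤ x.val
      exact sInf_le ⟨x, hx, rfl⟩
    · intro b hb
      show b.val ≤ a
      apply le_sInf
      rintro x ⟨u, hu, rfl⟩
      exact hb hu
  -- f is monotone
  have hmono : ∀ a b : C, a ≤ b → f a ≤ f b := by
    intro a b hab
    have hlub : IsLUB ({a, b} : Set C) b := by
      constructor
      · rintro x (rfl | rfl)
        · exact hab
        · exact le_rfl
      · intro c hc
        exact hc (Set.mem_insert_of_mem _ rfl)
    exact (hjoin _ b hlub).1 ⟨a, Set.mem_insert _ _, rfl⟩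
  intro y
  set X : Set C := {x : C | f x ≤ y} with hX
  set X' : Set C := {x : C | y ≤ f x} with hX'
  by_cases hpair : ∃ x ∈ X, ∃ x' ∈ X', x' ≤ x
  · obtain ⟨x, hx, x', hx', hle⟩ := hpair
    exact ⟨x', le_antisymm (le_trans (hmono _ _ hle) hx) hx'⟩
  · push_neg at hpair
    obtain ⟨s, hs⟩ := hsup X
    obtain ⟨t, ht⟩ := hinf X'
    have hfs : f s ≤ y := by
      apply (hjoin X s hs).2
      rintro _ ⟨x, hx, rfl⟩
      exact hx
    have hft : y ≤ f t := by
      apply (hmeet X' t ht).2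
      rintro _ ⟨x, hx, rfl⟩
      exact hx
    have hstle : s ≤ t := by
      apply ht.2
      intro x' hx'
      apply hs.2
      intro x hx
      rcases hchain.total x.2 x'.2 with h1 | h1
      · exact h1
      · exact absurd h1 (hpair x hx x' hx')
    rcases eq_or_lt_of_le hstle with heq | hlt
    · exact ⟨s, le_antisymm hfs (heq ▸ hft)⟩
    · exfalso
      have hst : s.1 ≤ t.1 := hstle
      have hsnet : s.1 ≠ t.1 := fun h => (ne_of_lt hlt) (Subtype.ext h)
      -- the midpoint of s and t
      set m : Fin d → unitInterval := fun i =>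
        ⟨((s.1 i : ℝ) + (t.1 i : ℝ)) / 2, by
          constructor
          · have := (s.1 i).2.1; have := (t.1 i).2.1; linarith
          · have := (s.1 i).2.2; have := (t.1 i).2.2; linarith⟩ with hm
      have hsm : s.1 ≤ m := by
        intro i
        show (s.1 i : ℝ) ≤ ((s.1 i : ℝ) + (t.1 i : ℝ)) / 2
        have : (s.1 i : ℝ) ≤ (t.1 i : ℝ) := hst i
        linarith
      have hmt : m ≤ t.1 := by
        intro i
        show ((s.1 i : ℝ) + (t.1 i : ℝ)) / 2 ≤ (t.1 i : ℝ)
        have : (s.1 i : ℝ) ≤ (t.1 i : ℝ) := hst i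
        linarith
      have hms : m ≠ s.1 := by
        intro h
        apply hsnet
        funext i
        have h1 : ((s.1 i : ℝ) + (t.1 i : ℝ)) / 2 = (s.1 i : ℝ) :=
          congrArg Subtype.val (congrFun h i)
        exact Subtype.ext (by linarith)
      have hmtne : m ≠ t.1 := by
        intro h
        apply hsnet
        funext i
        have h1 : ((s.1 i : ℝ) + (t.1 i : ℝ)) / 2 = (t.1 i : ℝ) :=
          congrArg Subtype.val (congrFun h i)
        exact Subtype.ext (by linarith)
      -- any c in C between s and t equals s or t
      have hbetween : ∀ c : C, s ≤ c → c ≤ t → c = s ∨ c = t := by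
        intro c hsc hct
        rcases le_total (f c) y with h1 | h1
        · exact Or.inl (le_antisymm (hs.1 h1) hsc)
        · exact Or.inr (le_antisymm hct (ht.1 h1))
      have hmC : m ∈ C := by
        apply mem_of_comp
        intro c hc
        rcases hchain.total hc s.2 with h1 | h1
        · exact Or.inr (le_trans h1 hsm)
        · rcases hchain.total hc t.2 with h2 | h2
          · rcases hbetween ⟨c, hc⟩ h1 h2 with h3 | h3
            · exact Or.inr (le_trans (le_of_eq (congrArg Subtype.val h3)) hsm)
            · exact Or.inl (le_trans hmt (ge_of_eq (congrArg Subtype.val h3)))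
          · exact Or.inl (le_trans hmt h2)
      rcases hbetween ⟨m, hmC⟩ hsm hmt with h3 | h3
      · exact hms (congrArg Subtype.val h3)
      · exact hmtne (congrArg Subtype.val h3)
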